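/- Let γ and γ' be two geodesic rays in a connected simple graph G, and suppose there exists a finite set V₀ of vertices and an integer T such that for all s, t ≥ T, every walk in G from γ(s) to γ'(t) passes through a vertex of V₀ (i.e., γ and γ' eventually lie in different connected components of the graph obtained by removing V₀). Then the function B_γ + B_γ' admits a global minimum over all vertices of G, and this minimum is attained at some vertex v₀ ∈ V₀. -/
import Mathlib


/-- A geodesic ray in a graph `G`: a sequence `γ : ℕ → V` with
`d(γ s, γ t) = |s − t|` for all `s, t`. -/
def IsGeodesicRay {V : Type*} (G : SimpleGraph V) (γ : ℕ → V) : Prop :=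
  ∀ s t : ℕ, (G.dist (γ s) (γ t) : ℤ) = |(s : ℤ) - (t : ℤ)|

/-- `B` is the Busemann function of the geodesic ray `γ`: for every vertex `v`,
`B v` is the eventual (limit) value of `d(v, γ t) − t`. -/
def IsBusemannFunction {V : Type*} (G : SimpleGraph V) (γ : ℕ → V) (B : V → ℤ) : Prop :=
  ∀ v : V, ∃ T : ℕ, ∀ t : ℕ, T ≤ t → B v = (G.dist v (γ t) : ℤ) - t

/-- If two geodesic rays `γ, γ'` eventually lie in different components after removing a
finite vertex set `V₀` (every walk between `γ s` and `γ' t`, for `s, t ≥ T`, meets `V₀`),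
then `B_γ + B_{γ'}` admits a global minimum, attained at some vertex of `V₀`. -/
theorem busemann_sum_min_attained {V : Type*} (G : SimpleGraph V) (hG : G.Connected)
    (γ γ' : ℕ → V) (hγ : IsGeodesicRay G γ) (hγ' : IsGeodesicRay G γ')
    (B B' : V → ℤ) (hB : IsBusemannFunction G γ B) (hB' : IsBusemannFunction G γ' B')
    (V₀ : Finset V) (T : ℕ)
    (hsep : ∀ s t : ℕ, T ≤ s → T ≤ t →
      ∀ p : G.Walk (γ s) (γ' t), ∃ v₀ ∈ V₀, v₀ ∈ p.support) :
    ∃ v₀ ∈ V₀, ∀ v : V, B v₀ + B' v₀ ≤ B v + B' v := by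
  classical
  obtain ⟨w⟩ := hG.preconnected (γ T) (γ' T)
  obtain ⟨u0, hu0, -⟩ := hsep T T le_rfl le_rfl w
  obtain ⟨v₀, hv₀, hmin⟩ := V₀.exists_min_image (fun u => B u + B' u) ⟨u0, hu0⟩
  refine ⟨v₀, hv₀, fun v => ?_⟩
  set f : V → ℕ := fun u => (hB u).choose with hf
  set f' : V → ℕ := fun u => (hB' u).choose with hf'
  set s : ℕ := max T (max (f v) (V₀.sup f)) with hs
  set t : ℕ := max T (max (f' v) (V₀.sup f')) with ht
  obtain ⟨p, hp⟩ := (hG.preconnected (γ s) (γ' t)).exists_walk_length_eq_dist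
  obtain ⟨u, huV, hup⟩ := hsep s t (le_max_left _ _) (le_max_left _ _) p
  -- split the geodesic walk at u
  have hsplit : G.dist (γ s) u + G.dist u (γ' t) ≤ G.dist (γ s) (γ' t) := by
    have h1 : G.dist (γ s) u ≤ (p.takeUntil u hup).length := SimpleGraph.dist_le _
    have h2 : G.dist u (γ' t) ≤ (p.dropUntil u hup).length := SimpleGraph.dist_le _
    have h3 : (p.takeUntil u hup).length + (p.dropUntil u hup).length = p.length := by
      rw [← SimpleGraph.Walk.length_append, p.take_spec hup]
    omega
  have htri : G.dist (γ s) (γ' t) ≤ G.dist (γ s) v + G.dist v (γ' t) :=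
    hG.dist_triangle
  have hBv : B v = (G.dist v (γ s) : ℤ) - s :=
    (hB v).choose_spec s (le_trans (le_max_left _ _) (le_max_right _ _))
  have hB'v : B' v = (G.dist v (γ' t) : ℤ) - t :=
    (hB' v).choose_spec t (le_trans (le_max_left _ _) (le_max_right _ _))
  have hfu : f u ≤ s := le_max_of_le_right (le_max_of_le_right (Finset.le_sup huV))
  have hf'u : f' u ≤ t := le_max_of_le_right (le_max_of_le_right (Finset.le_sup huV))
  have hBu : B u = (G.dist u (γ s) : ℤ) - s := (hB u).choose_spec s hfu
  have hB'u : B' u = (G.dist u (γ' t) : ℤ) - t := (hB' u).choose_spec t hf'u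
  have hc : G.dist u (γ s) = G.dist (γ s) u := SimpleGraph.dist_comm ..
  have hc' : G.dist v (γ s) = G.dist (γ s) v := SimpleGraph.dist_comm ..
  have key : B u + B' u ≤ B v + B' v := by
    rw [hBv, hB'v, hBu, hB'u, hc, hc']
    have : (G.dist (γ s) u : ℤ) + G.dist u (γ' t) ≤ (G.dist (γ s) v : ℤ) + G.dist v (γ' t) := by
      exact_mod_cast le_trans hsplit htri
    omega
  exact le_trans (hmin u huV) key
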